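/- Density of cylindrically supported L^q functions in tent spaces: Let μ be doubling and let p, q, α ∈ (0,∞). If f is a measurable function on X⁺ with ‖f‖_{T^{p,q,α}} < ∞, then for every ε > 0 there exists a measurable function g on X⁺ with cylindrical support satisfying g ∈ L^q(X⁺, dμ(y) dt/t) and ‖f − g‖_{T^{p,q,α}} < ε; indeed, for any fixed x₀ ∈ X one may take g = 1_{B(x₀,n) × (1/n, n)} f for n large enough. -/

import Mathlib

open MeasureTheory Metric Set
open scoped ENNReal NNReal

noncomputable section

variable {X : Type*}

/-- The measure `dμ(y) dt/t` on `X⁺ = X × (0,∞)`, modelled on `X × ℝ`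
(supported on `{t > 0}`). -/
def upHalf [MeasurableSpace X] (μ : Measure X) : Measure (X × ℝ) :=
  μ.prod ((volume.restrict (Set.Ioi (0:ℝ))).withDensity fun t => ENNReal.ofReal t⁻¹)

/-- The measure `dμ(y) dt` on `X⁺` (supported on `{t > 0}`). -/
def upHalf' [MeasurableSpace X] (μ : Measure X) : Measure (X × ℝ) :=
  μ.prod (volume.restrict (Set.Ioi (0:ℝ)))

/-- Cone of aperture `α` with vertex `x`. -/
def coneAt [PseudoMetricSpace X] (α : ℝ) (x : X) : Set (X × ℝ) :=
  {p | dist p.1 x < α * p.2}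

/-- Tent of aperture `α` over `O ⊆ X`: the complement in `X⁺` of the union of the
cones of aperture `α` with vertices outside `O`. -/
def tentOver [PseudoMetricSpace X] (α : ℝ) (O : Set X) : Set (X × ℝ) :=
  {p | 0 < p.2 ∧ ∀ x ∉ O, α * p.2 ≤ dist p.1 x}

/-- The `α`-shadow of `C ⊆ X⁺`: points whose cone meets `C`. -/
def shadowOf [PseudoMetricSpace X] (α : ℝ) (C : Set (X × ℝ)) : Set X :=
  {x | ∃ p ∈ C, p ∈ coneAt α x}

/-- The operator `A_q^α`:
`A_q^α(f)(x) = (∬_{Γ^α(x)} |f(y,t)|^q dμ(y)/V(y,αt) dt/t)^{1/q}`. -/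
def Afun [PseudoMetricSpace X] [MeasurableSpace X] (μ : Measure X) (q α : ℝ)
    (f : X × ℝ → ℝ) (x : X) : ℝ≥0∞ :=
  (∫⁻ p in coneAt α x,
      ENNReal.ofReal (|f p| ^ q) / μ (ball p.1 (α * p.2)) ∂upHalf μ) ^ (1/q)

/-- The truncated operator `A_q^α(·|h)`, integrating over the truncated cone
`Γ_h^α(x)`. -/
def AfunT [PseudoMetricSpace X] [MeasurableSpace X] (μ : Measure X) (q α h : ℝ)
    (f : X × ℝ → ℝ) (x : X) : ℝ≥0∞ :=
  (∫⁻ p in coneAt α x ∩ {p : X × ℝ | p.2 < h},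
      ENNReal.ofReal (|f p| ^ q) / μ (ball p.1 (α * p.2)) ∂upHalf μ) ^ (1/q)

/-- The Carleson operator `C_q^α`:
`C_q^α(f)(x) = sup_{B ∋ x} (μ(B)⁻¹ ∬_{T^α(B)} |f(y,t)|^q dμ(y) dt/t)^{1/q}`,
the supremum being over open balls containing `x`. -/
def Cfun [PseudoMetricSpace X] [MeasurableSpace X] (μ : Measure X) (q α : ℝ)
    (f : X × ℝ → ℝ) (x : X) : ℝ≥0∞ :=
  ⨆ (z : X) (ρ : ℝ) (_ : 0 < ρ ∧ x ∈ ball z ρ),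
    ((μ (ball z ρ))⁻¹ *
      ∫⁻ p in tentOver α (ball z ρ), ENNReal.ofReal (|f p| ^ q) ∂upHalf μ) ^ (1/q)

/-- The tent space quasi-norm `‖f‖_{T^{p,q,α}} = ‖A_q^α(f)‖_{L^p(X)}`. -/
def tNorm [PseudoMetricSpace X] [MeasurableSpace X] (μ : Measure X) (p q α : ℝ)
    (f : X × ℝ → ℝ) : ℝ≥0∞ :=
  (∫⁻ x, Afun μ q α f x ^ p ∂μ) ^ (1/p)

/-- The uncentred Hardy–Littlewood maximal operator applied to an
`ℝ≥0∞`-valued function. -/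
def maxFun [PseudoMetricSpace X] [MeasurableSpace X] (μ : Measure X)
    (g : X → ℝ≥0∞) (x : X) : ℝ≥0∞ :=
  ⨆ (z : X) (ρ : ℝ) (_ : 0 < ρ ∧ x ∈ ball z ρ),
    (μ (ball z ρ))⁻¹ * ∫⁻ y in ball z ρ, g y ∂μ

/-- `μ` is doubling: `V(x,2r) ≤ C V(x,r)` for all `x`, `r > 0`. -/
def DoublingMeas [PseudoMetricSpace X] [MeasurableSpace X] (μ : Measure X) : Prop :=
  ∃ C > (0:ℝ), ∀ (x : X) (r : ℝ), 0 < r →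
    μ (ball x (2 * r)) ≤ ENNReal.ofReal C * μ (ball x r)

/-- **Density of cylindrically supported `L^q` functions.** If `μ` is doubling,
`p,q,α > 0` and `‖f‖_{T^{p,q,α}} < ∞`, then for every `ε > 0` and every `x₀ ∈ X`,
for all large `n` the truncation `g = 1_{B(x₀,n) × (1/n,n)} f` lies in
`L^q(X⁺, dμ dt/t)` and satisfies `‖f - g‖_{T^{p,q,α}} < ε`. -/
lemma exists_finite_net {Y : Type*} [MetricSpace Y] (s : Set Y) (r : ℝ)
    (H : ¬ ∃ u : ℕ → Y, (∀ k, u k ∈ s) ∧ ∀ j k : ℕ, j < k → r ≤ dist (u k) (u j)) :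
    ∃ t : Finset Y, s ⊆ ⋃ y ∈ t, ball y r := by
  classical
  by_contra h'
  push_neg at h'
  have key : ∀ t : Finset Y, ∃ x, x ∈ s ∧ ∀ y ∈ t, r ≤ dist x y := by
    intro t
    obtain ⟨x, hxs, hx⟩ := Set.not_subset.1 (h' t)
    refine ⟨x, hxs, fun y hy => ?_⟩
    by_contra hlt
    push_neg at hlt
    exact hx (Set.mem_biUnion hy (mem_ball.2 hlt))
  choose F hFs hFd using key
  set S : ℕ → Finset Y := fun k => Nat.rec ∅ (fun _ t => insert (F t) t) k with hSdef
  have hS : ∀ k, S (k+1) = insert (F (S k)) (S k) := fun k => rfl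
  have hmono : ∀ j k : ℕ, j ≤ k → S j ⊆ S k := by
    intro j k hjk
    induction k, hjk using Nat.le_induction with
    | base => exact Finset.Subset.refl _
    | succ m hm ih => exact ih.trans (by rw [hS]; exact Finset.subset_insert _ _)
  exact H ⟨fun k => F (S k), fun k => hFs _, fun j k hjk =>
    hFd (S k) (F (S j)) (hmono (j+1) k hjk (by rw [hS]; exact Finset.mem_insert_self _ _))⟩

lemma no_inf_sep {X : Type*} [MetricSpace X] [MeasurableSpace X] [BorelSpace X] (μ : Measure X)
    (hpos : ∀ (x : X) (r : ℝ), 0 < r → 0 < μ (ball x r))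
    (hfin : ∀ (x : X) (r : ℝ), 0 < r → μ (ball x r) < ∞)
    (hdb : ∃ C > (0:ℝ), ∀ (x : X) (r : ℝ), 0 < r →
      μ (ball x (2 * r)) ≤ ENNReal.ofReal C * μ (ball x r))
    (x₀ : X) (R r : ℝ) (hR : 0 < R) (hr : 0 < r) :
    ¬ ∃ u : ℕ → X, (∀ k, u k ∈ ball x₀ R) ∧ ∀ j k : ℕ, j < k → r ≤ dist (u k) (u j) := by
  rintro ⟨u, hu, hsep⟩
  obtain ⟨C, hC0, hCd⟩ := hdb
  have hiter : ∀ (y : X) (s : ℝ), 0 < s → ∀ j : ℕ,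
      μ (ball y (2^j * s)) ≤ (ENNReal.ofReal C)^j * μ (ball y s) := by
    intro y s hs j
    induction j with
    | zero => simp
    | succ m ih =>
      have h2 : (2:ℝ)^(m+1) * s = 2 * (2^m * s) := by ring
      rw [h2]
      calc μ (ball y (2*(2^m*s))) ≤ ENNReal.ofReal C * μ (ball y (2^m*s)) :=
            hCd y _ (by positivity)
        _ ≤ ENNReal.ofReal C * ((ENNReal.ofReal C)^m * μ (ball y s)) := by gcongr
        _ = (ENNReal.ofReal C)^(m+1) * μ (ball y s) := by ring
  obtain ⟨j, hj⟩ := pow_unbounded_of_one_lt ((2*R + r/2)/(r/2)) (one_lt_two (α := ℝ))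
  have hj' : 2*R + r/2 < 2^j * (r/2) := by
    have := (div_lt_iff₀ (by positivity : (0:ℝ) < r/2)).1 hj
    linarith
  set c : ℝ≥0∞ := μ (ball x₀ R) / (ENNReal.ofReal C)^j with hc
  have hcle : ∀ k : ℕ, c ≤ μ (ball (u k) (r/2)) := by
    intro k
    apply ENNReal.div_le_of_le_mul
    have hsub : ball x₀ R ⊆ ball (u k) (2^j * (r/2)) := by
      intro z hz
      have h1 : dist z (u k) ≤ dist z x₀ + dist x₀ (u k) := dist_triangle _ _ _
      have h2 := mem_ball.1 hz
      have h3 := mem_ball.1 (hu k)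
      rw [dist_comm x₀ (u k)] at h1
      rw [mem_ball]
      linarith
    calc μ (ball x₀ R) ≤ μ (ball (u k) (2^j*(r/2))) := measure_mono hsub
      _ ≤ (ENNReal.ofReal C)^j * μ (ball (u k) (r/2)) := hiter _ _ (by positivity) j
      _ = μ (ball (u k) (r/2)) * (ENNReal.ofReal C)^j := mul_comm _ _
  have hcne : c ≠ 0 := by
    apply ne_of_gt
    exact ENNReal.div_pos (hpos x₀ R hR).ne' (ENNReal.pow_ne_top ENNReal.ofReal_ne_top)
  have hdisj : Pairwise (Function.onFun Disjoint fun k => ball (u k) (r/2)) := by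
    have key : ∀ a b : ℕ, a < b → Disjoint (ball (u b) (r/2)) (ball (u a) (r/2)) := by
      intro a b hab
      rw [Set.disjoint_left]
      intro z hzb hza
      have h1 := mem_ball.1 hzb
      have h2 := mem_ball.1 hza
      have h3 := hsep a b hab
      have h4 : dist (u b) (u a) ≤ dist (u b) z + dist z (u a) := dist_triangle _ _ _
      rw [dist_comm (u b) z] at h4
      linarith
    intro a b hab
    rcases hab.lt_or_gt with h | h
    · exact (key a b h).symm
    · exact key b a h
  have hsum : μ (⋃ k, ball (u k) (r/2)) = ∑' k : ℕ, μ (ball (u k) (r/2)) :=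
    measure_iUnion hdisj (fun _ => measurableSet_ball)
  have htop : (⊤ : ℝ≥0∞) ≤ μ (⋃ k, ball (u k) (r/2)) := by
    rw [hsum, ← ENNReal.tsum_const_eq_top_of_ne_zero (α := ℕ) hcne]
    exact ENNReal.tsum_le_tsum hcle
  have hfin2 : μ (⋃ k, ball (u k) (r/2)) < ⊤ := by
    refine lt_of_le_of_lt (measure_mono ?_) (hfin x₀ (R + r/2) (by positivity))
    refine Set.iUnion_subset fun k z hz => ?_
    have h1 := mem_ball.1 hz
    have h2 := mem_ball.1 (hu k)
    have h3 := dist_triangle z (u k) x₀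
    rw [mem_ball]
    linarith
  exact absurd (lt_of_le_of_lt htop hfin2) (lt_irrefl _)
instance upHalf.instSFinite {X : Type*} [MeasurableSpace X] (μ : Measure X) [SigmaFinite μ] :
    SFinite (upHalf μ) := by unfold upHalf; infer_instance

lemma measurableSet_coneAt' {X : Type*} [PseudoMetricSpace X] [MeasurableSpace X] [BorelSpace X]
    (α : ℝ) (x : X) : MeasurableSet (coneAt α x) :=
  measurableSet_lt (continuous_fst.dist continuous_const).measurable
    (continuous_const.mul continuous_snd).measurable

lemma measurable_muball {X : Type*} [PseudoMetricSpace X] [MeasurableSpace X] [BorelSpace X]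
    [SecondCountableTopology X]
    (μ : Measure X) [SigmaFinite μ] (α : ℝ) :
    Measurable fun p : X × ℝ => μ (ball p.1 (α * p.2)) := by
  set T : Set ((X × ℝ) × X) := {z : (X × ℝ) × X | dist z.2 z.1.1 < α * z.1.2} with hTdef
  have hTm : MeasurableSet T :=
    measurableSet_lt (continuous_snd.dist continuous_fst.fst).measurable
      (continuous_const.mul continuous_fst.snd).measurable
  have hF : Measurable fun z : (X × ℝ) × X => T.indicator (fun _ => (1:ℝ≥0∞)) z :=
    measurable_const.indicator hTm
  have h := hF.lintegral_prod_right' (ν := μ)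
  have heq : ∀ p : X × ℝ,
      (∫⁻ y, T.indicator (fun _ => (1:ℝ≥0∞)) (p, y) ∂μ) = μ (ball p.1 (α * p.2)) := by
    intro p
    have hsl : MeasurableSet (ball p.1 (α * p.2)) := measurableSet_ball
    have hfun : (fun y => T.indicator (fun _ => (1:ℝ≥0∞)) (p, y))
        = Set.indicator (ball p.1 (α * p.2)) (fun _ => 1) := by
      funext y
      by_cases hy : dist y p.1 < α * p.2
      · have h1 : (p, y) ∈ T := hy
        have h2 : y ∈ ball p.1 (α * p.2) := mem_ball.2 hy
        rw [Set.indicator_of_mem h1, Set.indicator_of_mem h2]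
      · have h1 : (p, y) ∉ T := hy
        have h2 : y ∉ ball p.1 (α * p.2) := fun hc => hy (mem_ball.1 hc)
        rw [Set.indicator_of_notMem h1, Set.indicator_of_notMem h2]
    rw [hfun, lintegral_indicator hsl, setLIntegral_one]
  rw [show (fun p : X × ℝ => μ (ball p.1 (α * p.2)))
    = fun p => ∫⁻ y, T.indicator (fun _ => (1:ℝ≥0∞)) (p, y) ∂μ from (funext heq).symm]
  exact h

lemma measurable_setCone {X : Type*} [PseudoMetricSpace X] [MeasurableSpace X] [BorelSpace X]
    [SecondCountableTopology X]
    (μ : Measure X) [SigmaFinite μ] (α : ℝ) (g : X × ℝ → ℝ≥0∞) (hg : Measurable g)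
    (s : Set (X × ℝ)) (hs : MeasurableSet s) :
    Measurable fun x : X => ∫⁻ p in coneAt α x ∩ s, g p ∂upHalf μ := by
  set T : Set (X × (X × ℝ)) := {z | z.2 ∈ s ∧ dist z.2.1 z.1 < α * z.2.2} with hTdef
  have hTm : MeasurableSet T := by
    have hrw : T = (Prod.snd ⁻¹' s) ∩ {z : X × (X × ℝ) | dist z.2.1 z.1 < α * z.2.2} := rfl
    rw [hrw]
    exact (measurable_snd hs).inter
      (measurableSet_lt ((continuous_snd.fst).dist continuous_fst).measurable
        (continuous_const.mul continuous_snd.snd).measurable)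
  have hF : Measurable fun z : X × (X × ℝ) => T.indicator (fun w => g w.2) z :=
    (hg.comp measurable_snd).indicator hTm
  have h := hF.lintegral_prod_right' (ν := upHalf μ)
  have heq : ∀ x : X, (∫⁻ p, T.indicator (fun w : X × (X × ℝ) => g w.2) (x, p) ∂upHalf μ)
      = ∫⁻ p in coneAt α x ∩ s, g p ∂upHalf μ := by
    intro x
    rw [← lintegral_indicator ((measurableSet_coneAt' α x).inter hs)]
    congr 1
    funext p
    by_cases hp : p ∈ coneAt α x ∩ s
    · have h1 : (x, p) ∈ T := ⟨hp.2, hp.1⟩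
      rw [Set.indicator_of_mem hp, Set.indicator_of_mem h1]
    · have h1 : (x, p) ∉ T := fun hc => hp ⟨hc.2, hc.1⟩
      rw [Set.indicator_of_notMem hp, Set.indicator_of_notMem h1]
  rw [show (fun x : X => ∫⁻ p in coneAt α x ∩ s, g p ∂upHalf μ)
    = fun x => ∫⁻ p, T.indicator (fun w : X × (X × ℝ) => g w.2) (x, p) ∂upHalf μ
    from (funext heq).symm]
  exact h

lemma secondCountable_of_doubling {X : Type*} [MetricSpace X] [MeasurableSpace X] [BorelSpace X]
    (μ : Measure X)
    (hpos : ∀ (x : X) (r : ℝ), 0 < r → 0 < μ (ball x r))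
    (hfin : ∀ (x : X) (r : ℝ), 0 < r → μ (ball x r) < ∞)
    (hdb : ∃ C > (0:ℝ), ∀ (x : X) (r : ℝ), 0 < r →
      μ (ball x (2 * r)) ≤ ENNReal.ofReal C * μ (ball x r))
    (x₀ : X) : SecondCountableTopology X := by
  have hnet : ∀ n m : ℕ, ∃ t : Finset X,
      ball x₀ ((n:ℝ)+1) ⊆ ⋃ y ∈ t, ball y (1/((m:ℝ)+1)) := by
    intro n m
    exact exists_finite_net _ _
      (no_inf_sep μ hpos hfin hdb x₀ _ _ (by positivity) (by positivity))
  choose t ht using hnet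
  have : TopologicalSpace.SeparableSpace X := by
    refine ⟨⟨⋃ n : ℕ, ⋃ m : ℕ, ↑(t n m), ?_, ?_⟩⟩
    · exact Set.countable_iUnion fun n => Set.countable_iUnion fun m => (t n m).countable_toSet
    · rw [Metric.dense_iff]
      intro x r hr
      obtain ⟨n, hn⟩ := exists_nat_gt (dist x x₀)
      obtain ⟨m, hm⟩ := exists_nat_one_div_lt hr
      have hx : x ∈ ball x₀ ((n:ℝ)+1) := mem_ball.2 (by linarith)
      obtain ⟨y, hyt, hxy⟩ := Set.mem_iUnion₂.1 (ht n m hx)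
      refine ⟨y, Set.mem_inter (mem_ball.2 ?_) ?_⟩
      · have := mem_ball.1 hxy
        rw [dist_comm]
        linarith
      · exact Set.mem_iUnion.2 ⟨n, Set.mem_iUnion.2 ⟨m, hyt⟩⟩
  exact UniformSpace.secondCountable_of_separable X

theorem cylindrical_dense [MetricSpace X] [MeasurableSpace X] [BorelSpace X]
    (μ : Measure X) [SigmaFinite μ]
    (hpos : ∀ (x : X) (r : ℝ), 0 < r → 0 < μ (ball x r))
    (hfin : ∀ (x : X) (r : ℝ), 0 < r → μ (ball x r) < ∞)
    (hdb : DoublingMeas μ)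
    (p q α : ℝ) (hp : 0 < p) (hq : 0 < q) (hα : 0 < α)
    (f : X × ℝ → ℝ) (hf : Measurable f) (hfT : tNorm μ p q α f < ∞)
    (x₀ : X) (ε : ℝ) (hε : 0 < ε) :
    ∃ N : ℕ, ∀ n ≥ N,
      (∫⁻ pt, ENNReal.ofReal
          (|(ball x₀ (n:ℝ) ×ˢ Ioo ((n:ℝ)⁻¹) (n:ℝ)).indicator f pt| ^ q) ∂upHalf μ) < ∞ ∧
      tNorm μ p q α (f - (ball x₀ (n:ℝ) ×ˢ Ioo ((n:ℝ)⁻¹) (n:ℝ)).indicator f)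
        < ENNReal.ofReal ε := by
  classical
  have hsc : SecondCountableTopology X := secondCountable_of_doubling μ hpos hfin hdb x₀
  set g₀ : X × ℝ → ℝ≥0∞ := fun pt => ENNReal.ofReal (|f pt| ^ q) / μ (ball pt.1 (α * pt.2))
    with hg₀def
  have hg₀m : Measurable g₀ := by
    apply Measurable.div
    · exact ENNReal.measurable_ofReal.comp
        ((Real.continuous_rpow_const hq.le).measurable.comp hf.abs)
    · exact measurable_muball μ α
  set cyl : ℕ → Set (X × ℝ) := fun n => ball x₀ (n:ℝ) ×ˢ Ioo ((n:ℝ)⁻¹) (n:ℝ) with hcyldef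
  have hcylm : ∀ n, MeasurableSet (cyl n) := fun n =>
    isOpen_ball.measurableSet.prod measurableSet_Ioo
  have hcylmono : Monotone cyl := by
    intro a b hab
    rcases Nat.eq_zero_or_pos a with ha | ha
    · subst ha
      simp [hcyldef, ball_zero]
    · have ha' : (0:ℝ) < a := by exact_mod_cast ha
      have hab' : (a:ℝ) ≤ b := by exact_mod_cast hab
      exact Set.prod_mono (ball_subset_ball hab')
        (Set.Ioo_subset_Ioo (inv_anti₀ ha' hab') hab')
  set I : ℕ → X → ℝ≥0∞ := fun n x => ∫⁻ pt in coneAt α x ∩ (cyl n)ᶜ, g₀ pt ∂upHalf μ with hIdef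
  set Iinf : X → ℝ≥0∞ := fun x => ∫⁻ pt in coneAt α x, g₀ pt ∂upHalf μ with hIinfdef
  have hIm : ∀ n, Measurable (I n) := fun n =>
    measurable_setCone μ α g₀ hg₀m _ (hcylm n).compl
  have hIinfm : Measurable Iinf := by
    have h := measurable_setCone μ α g₀ hg₀m Set.univ MeasurableSet.univ
    simpa [Set.inter_univ] using h
  have hIle : ∀ n x, I n x ≤ Iinf x := fun n x =>
    lintegral_mono_set Set.inter_subset_left
  have hAfun_eq : ∀ x, Afun μ q α f x = (Iinf x) ^ (1/q) := fun x => rfl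
  have hJ : (∫⁻ x, ((Iinf x) ^ (1/q)) ^ p ∂μ) ≠ ⊤ := by
    intro hcon
    rw [tNorm] at hfT
    rw [show (∫⁻ x, Afun μ q α f x ^ p ∂μ) = ∫⁻ x, ((Iinf x) ^ (1/q)) ^ p ∂μ from rfl,
      hcon, ENNReal.top_rpow_of_pos (by positivity : (0:ℝ) < 1/p)] at hfT
    exact absurd hfT (lt_irrefl _)
  have hGood : ∀ᵐ x ∂μ, Iinf x < ⊤ := by
    have hmeas : Measurable fun x => ((Iinf x) ^ (1/q)) ^ p :=
      ENNReal.continuous_rpow_const.measurable.comp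
        (ENNReal.continuous_rpow_const.measurable.comp hIinfm)
    filter_upwards [ae_lt_top hmeas hJ] with x hx
    by_contra hcon
    push_neg at hcon
    rw [top_le_iff.1 hcon, ENNReal.top_rpow_of_pos (by positivity : (0:ℝ) < 1/q),
      ENNReal.top_rpow_of_pos hp] at hx
    exact absurd hx (lt_irrefl _)
  have hconv : ∀ x, Iinf x ≠ ⊤ → Filter.Tendsto (fun n => I n x) Filter.atTop (nhds 0) := by
    intro x hx
    set ν : Measure (X × ℝ) := ((upHalf μ).restrict (coneAt α x)).withDensity g₀ with hνdef
    have hνapp : ∀ s : Set (X × ℝ), MeasurableSet s →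
        ν s = ∫⁻ pt in s ∩ coneAt α x, g₀ pt ∂upHalf μ := by
      intro s hs
      rw [hνdef, withDensity_apply g₀ hs, Measure.restrict_restrict hs]
    have hνtot : ν Set.univ = Iinf x := by
      rw [hνapp _ MeasurableSet.univ, Set.univ_inter]
    have htends := tendsto_measure_iInter_atTop (μ := ν) (s := fun n => (cyl n)ᶜ)
      (fun n => ((hcylm n).compl).nullMeasurableSet)
      (fun m n hmn => Set.compl_subset_compl.2 (hcylmono hmn))
      ⟨0, by
        refine ne_top_of_le_ne_top (by rw [hνtot]; exact hx) (measure_mono (Set.subset_univ _))⟩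
    have hempty : (⋂ n, (cyl n)ᶜ) ∩ coneAt α x = ∅ := by
      rw [Set.eq_empty_iff_forall_notMem]
      rintro pt ⟨hall, hcone⟩
      have hd : dist pt.1 x < α * pt.2 := hcone
      have hd0 : 0 < α * pt.2 := lt_of_le_of_lt dist_nonneg hd
      have hp2 : 0 < pt.2 := by
        by_contra hc
        push_neg at hc
        nlinarith
      obtain ⟨n, hn⟩ := exists_nat_gt (max (dist pt.1 x₀) (max pt.2 pt.2⁻¹))
      have hn1 : dist pt.1 x₀ < n := lt_of_le_of_lt (le_max_left _ _) hn
      have hn2 : pt.2 < n := lt_of_le_of_lt (le_trans (le_max_left _ _) (le_max_right _ _)) hn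
      have hn3 : pt.2⁻¹ < n := lt_of_le_of_lt (le_trans (le_max_right _ _) (le_max_right _ _)) hn
      have hn4 : (n:ℝ)⁻¹ < pt.2 := by
        have h0 : (0:ℝ) < pt.2⁻¹ := inv_pos.2 hp2
        calc (n:ℝ)⁻¹ < (pt.2⁻¹)⁻¹ := by
              apply inv_strictAnti₀ h0 hn3
          _ = pt.2 := inv_inv _
      have hmem : pt ∈ cyl n := ⟨mem_ball.2 hn1, hn4, hn2⟩
      exact (Set.mem_iInter.1 hall n) hmem
    have h0 : ν (⋂ n, (cyl n)ᶜ) = 0 := by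
      rw [hνapp _ (MeasurableSet.iInter fun n => (hcylm n).compl), hempty]
      simp
    rw [h0] at htends
    refine Filter.Tendsto.congr (fun n => ?_) htends
    show ν ((cyl n)ᶜ) = I n x
    rw [hνapp _ (hcylm n).compl, Set.inter_comm, hIdef]
  have hrem : ∀ n : ℕ, f - (cyl n).indicator f = ((cyl n)ᶜ).indicator f := by
    intro n
    funext pt
    by_cases hpt : pt ∈ cyl n
    · have h1 : pt ∉ (cyl n)ᶜ := fun hc => hc hpt
      simp [Set.indicator_of_mem hpt, Set.indicator_of_notMem h1]
    · simp [Set.indicator_of_notMem hpt, Set.indicator_of_mem (Set.mem_compl hpt)]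
  have hAcompl : ∀ n x, Afun μ q α (((cyl n)ᶜ).indicator f) x = (I n x) ^ (1/q) := by
    intro n x
    have hint : ∀ pt : X × ℝ,
        ENNReal.ofReal (|((cyl n)ᶜ).indicator f pt| ^ q) / μ (ball pt.1 (α * pt.2))
          = ((cyl n)ᶜ).indicator g₀ pt := by
      intro pt
      by_cases hpt : pt ∈ (cyl n)ᶜ
      · rw [Set.indicator_of_mem hpt, Set.indicator_of_mem hpt]
      · rw [Set.indicator_of_notMem hpt, Set.indicator_of_notMem hpt]
        simp [abs_zero, Real.zero_rpow hq.ne']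
    rw [Afun]
    congr 1
    rw [show (∫⁻ pt in coneAt α x,
        ENNReal.ofReal (|((cyl n)ᶜ).indicator f pt| ^ q) / μ (ball pt.1 (α * pt.2)) ∂upHalf μ)
      = ∫⁻ pt in coneAt α x, ((cyl n)ᶜ).indicator g₀ pt ∂upHalf μ from by
        apply lintegral_congr
        intro pt
        exact hint pt]
    rw [lintegral_indicator (hcylm n).compl, Measure.restrict_restrict (hcylm n).compl,
      Set.inter_comm, hIdef]
  set G : ℕ → ℝ≥0∞ := fun n => ∫⁻ x, ((I n x) ^ (1/q)) ^ p ∂μ with hGdef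
  have hGtend : Filter.Tendsto G Filter.atTop (nhds 0) := by
    have hdom := tendsto_lintegral_of_dominated_convergence (μ := μ)
      (F := fun n x => ((I n x) ^ (1/q)) ^ p) (f := fun _ => (0:ℝ≥0∞))
      (bound := fun x => ((Iinf x) ^ (1/q)) ^ p)
      (fun n => ENNReal.continuous_rpow_const.measurable.comp
        (ENNReal.continuous_rpow_const.measurable.comp (hIm n)))
      (fun n => Filter.Eventually.of_forall fun x =>
        ENNReal.rpow_le_rpow (ENNReal.rpow_le_rpow (hIle n x) (by positivity)) hp.le)
      hJ
      (by
        filter_upwards [hGood] with x hx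
        have h1 := hconv x hx.ne
        have h2 : Filter.Tendsto (fun n => (I n x) ^ (1/q)) Filter.atTop
            (nhds ((0:ℝ≥0∞) ^ (1/q))) :=
          (ENNReal.continuous_rpow_const.tendsto 0).comp h1
        rw [ENNReal.zero_rpow_of_pos (by positivity : (0:ℝ) < 1/q)] at h2
        have h3 : Filter.Tendsto (fun n => ((I n x) ^ (1/q)) ^ p) Filter.atTop
            (nhds ((0:ℝ≥0∞) ^ p)) :=
          (ENNReal.continuous_rpow_const.tendsto 0).comp h2
        rwa [ENNReal.zero_rpow_of_pos hp] at h3)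
    rw [hGdef]
    simpa only [lintegral_zero] using hdom
  have hGtend' : Filter.Tendsto (fun n => (G n) ^ (1/p)) Filter.atTop (nhds 0) := by
    have h := ((ENNReal.continuous_rpow_const (y := 1/p)).tendsto 0).comp hGtend
    rwa [ENNReal.zero_rpow_of_pos (by positivity : (0:ℝ) < 1/p)] at h
  have hev : ∀ᶠ n in Filter.atTop, (G n) ^ (1/p) < ENNReal.ofReal ε :=
    hGtend'.eventually (gt_mem_nhds (ENNReal.ofReal_pos.2 hε))
  obtain ⟨N₂, hN₂⟩ := Filter.eventually_atTop.1 hev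
  refine ⟨max N₂ 1, fun n hn => ?_⟩
  have hn1 : 1 ≤ n := le_trans (le_max_right _ _) hn
  have hn2 : N₂ ≤ n := le_trans (le_max_left _ _) hn
  have hnR : (0:ℝ) < n := by exact_mod_cast hn1
  constructor
  · -- finiteness of the L^q integral over the cylinder
    show (∫⁻ pt, ENNReal.ofReal (|(cyl n).indicator f pt| ^ q) ∂upHalf μ) < ∞
    have hint2 : ∀ pt : X × ℝ, ENNReal.ofReal (|(cyl n).indicator f pt| ^ q)
        = (cyl n).indicator (fun pt => ENNReal.ofReal (|f pt| ^ q)) pt := by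
      intro pt
      by_cases hpt : pt ∈ cyl n
      · rw [Set.indicator_of_mem hpt, Set.indicator_of_mem hpt]
      · rw [Set.indicator_of_notMem hpt, Set.indicator_of_notMem hpt]
        simp [abs_zero, Real.zero_rpow hq.ne']
    rw [show (∫⁻ pt, ENNReal.ofReal (|(cyl n).indicator f pt| ^ q) ∂upHalf μ)
      = ∫⁻ pt in cyl n, ENNReal.ofReal (|f pt| ^ q) ∂upHalf μ from by
        rw [lintegral_congr hint2, lintegral_indicator (hcylm n)]]
    set M := μ (ball x₀ ((n:ℝ) + α * n)) with hMdef
    have hMfin : M < ⊤ := hfin _ _ (by positivity)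
    have hbound : (∫⁻ pt in cyl n, ENNReal.ofReal (|f pt| ^ q) ∂upHalf μ)
        ≤ (∫⁻ pt in cyl n, g₀ pt ∂upHalf μ) * M := by
      rw [← lintegral_mul_const M hg₀m]
      apply setLIntegral_mono (hg₀m.mul measurable_const)
      rintro pt ⟨hpt1, hpt2⟩
      have ht0 : 0 < pt.2 := lt_trans (by positivity) hpt2.1
      have hb0 : μ (ball pt.1 (α * pt.2)) ≠ 0 := (hpos _ _ (by positivity)).ne'
      have hbt : μ (ball pt.1 (α * pt.2)) ≠ ⊤ := (hfin _ _ (by positivity)).ne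
      have hsub : ball pt.1 (α * pt.2) ⊆ ball x₀ ((n:ℝ) + α * n) := by
        apply ball_subset_ball'
        have h1 := mem_ball.1 hpt1
        have h2 := hpt2.2
        nlinarith
      calc ENNReal.ofReal (|f pt| ^ q)
          = g₀ pt * μ (ball pt.1 (α * pt.2)) := (ENNReal.div_mul_cancel hb0 hbt).symm
        _ ≤ g₀ pt * M := mul_le_mul_right (measure_mono hsub) _
    set r : ℝ := α / (2 * n) with hrdef
    have hrpos : 0 < r := by positivity
    obtain ⟨t, ht⟩ := exists_finite_net (ball x₀ (n:ℝ)) r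
      (no_inf_sep μ hpos hfin hdb x₀ n r hnR hrpos)
    have hzex : ∀ y : X, ∃ z, z ∈ ball y r ∧ Iinf z < ⊤ := by
      intro y
      by_contra hcon
      push_neg at hcon
      have hsubbad : ball y r ⊆ {x | ¬ Iinf x < ⊤} := fun z hz' => not_lt.2 (hcon z hz')
      exact (hpos y r hrpos).ne' (measure_mono_null hsubbad (ae_iff.1 hGood))
    choose z hz1 hz2 using hzex
    have hcover : cyl n ⊆ ⋃ y ∈ t, coneAt α (z y) := by
      rintro pt ⟨hp1, hp2⟩
      obtain ⟨y, hyt, hpy⟩ := Set.mem_iUnion₂.1 (ht hp1)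
      refine Set.mem_iUnion₂.2 ⟨y, hyt, ?_⟩
      show dist pt.1 (z y) < α * pt.2
      have h1 : dist pt.1 y < r := mem_ball.1 hpy
      have h2 : dist (z y) y < r := mem_ball.1 (hz1 y)
      have h3 : (n:ℝ)⁻¹ < pt.2 := hp2.1
      have h4 : dist pt.1 (z y) ≤ dist pt.1 y + dist y (z y) := dist_triangle _ _ _
      rw [dist_comm (z y) y] at h2
      have h5 : α * (n:ℝ)⁻¹ < α * pt.2 := mul_lt_mul_of_pos_left h3 hα
      have h6 : r + r = α * (n:ℝ)⁻¹ := by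
        rw [hrdef]
        field_simp
        ring
      linarith
    have hcylint : (∫⁻ pt in cyl n, g₀ pt ∂upHalf μ) < ⊤ := by
      have hle1 : (∫⁻ pt in cyl n, g₀ pt ∂upHalf μ)
          ≤ ∫⁻ pt in ⋃ y ∈ t, coneAt α (z y), g₀ pt ∂upHalf μ := lintegral_mono_set hcover
      have hle2 : (∫⁻ pt in ⋃ y ∈ t, coneAt α (z y), g₀ pt ∂upHalf μ)
          ≤ ∑' y : t, ∫⁻ pt in coneAt α (z y), g₀ pt ∂upHalf μ := by
        have huni : ⋃ y ∈ t, coneAt α (z y) = ⋃ y : t, coneAt α (z (y : X)) := by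
          ext pt
          simp
        rw [huni]
        exact lintegral_iUnion_le _ _
      refine lt_of_le_of_lt (hle1.trans hle2) ?_
      rw [tsum_fintype]
      exact ENNReal.sum_lt_top.2 fun y _ => hz2 y
    exact lt_of_le_of_lt hbound (ENNReal.mul_lt_top hcylint hMfin)
  · -- smallness of the tent-space norm of the remainder
    show tNorm μ p q α (f - (cyl n).indicator f) < ENNReal.ofReal ε
    rw [hrem n, tNorm]
    rw [show (∫⁻ x, Afun μ q α (((cyl n)ᶜ).indicator f) x ^ p ∂μ) = G n from by
      rw [hGdef]
      exact lintegral_congr fun x => by rw [hAcompl n x]]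
    exact hN₂ n hn2
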